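/- Consider the (k+2)×(k+2) next generation matrix G = F V⁻¹ where F has single nonzero entry F₁₂ = β_vh, and V is the lower-triangular-plus-diagonal matrix with V₁₁ = δ_h, V₂₂ = δ_v, V₂₁ = −β_hv, V₂,(i+2) = −β_{r_i v}, V_{(i+2),2} = −β_{v r_i}, V_{(i+2),(i+2)} = δ_{r_i} − ν_i, and V_{(i+2),(j+2)} = −γ_{ji} for i ≠ j, all other entries zero. Let K be the k×k lower-right block of V (rows and columns 3..k+2). Then the spectral radius of G equals (β_hv β_vh det K)/(δ_h det(V₁,₁)), where V₁,₁ is V with row 1 and column 1 deleted. -/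

import Mathlib

/-- Spectral radius of a real matrix: the supremum of the absolute values of the
(complex) roots of its characteristic polynomial. -/
noncomputable def specRad {n : Type*} [Fintype n] [DecidableEq n]
    (A : Matrix n n ℝ) : ℝ :=
  sSup {r : ℝ | ∃ μ : ℂ, ((A.map (algebraMap ℝ ℂ)).charpoly).IsRoot μ ∧ r = ‖μ‖}

/-- The `(k+2)×(k+2)` matrix `V` of the full human–vector–reservoir model.
Row/column `0` is the human, row/column `1` the vector, and rows/columns `i+2`
(for `0 ≤ i < k`) correspond to the reservoirs `R_{i+1}`; the parameter functions
are indexed so that index `i` refers to reservoir `R_{i+1}`. -/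
def Vfull (k : ℕ) (βhv δh δv : ℝ) (βrv βvr δr ν : ℕ → ℝ) (γ : ℕ → ℕ → ℝ) :
    Matrix (Fin (k + 2)) (Fin (k + 2)) ℝ :=
  Matrix.of fun i j =>
    if i.val = 0 then (if j.val = 0 then δh else 0)
    else if i.val = 1 then
      (if j.val = 0 then -βhv else if j.val = 1 then δv else -βrv (j.val - 2))
    else if j.val = 0 then 0
    else if j.val = 1 then -βvr (i.val - 2)
    else if i.val = j.val then δr (i.val - 2) - ν (i.val - 2)
    else -γ (j.val - 2) (i.val - 2)

/-- The `(k+2)×(k+2)` matrix `F`, whose single nonzero entry is `F₀₁ = β_vh`. -/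
def Ffull (k : ℕ) (βvh : ℝ) : Matrix (Fin (k + 2)) (Fin (k + 2)) ℝ :=
  Matrix.of fun i j => if i.val = 0 ∧ j.val = 1 then βvh else 0

open Polynomial Matrix in
private lemma charpoly_row_zero' {n : ℕ} (A : Matrix (Fin (n+1)) (Fin (n+1)) ℂ)
    (h : ∀ i j : Fin (n+1), i ≠ 0 → A i j = 0) :
    A.charpoly = X ^ n * (X - C (A 0 0)) := by
  rw [Matrix.charpoly, Matrix.det_succ_column_zero]
  rw [Finset.sum_eq_single 0]
  · have hsub : (charmatrix A).submatrix (Fin.succAbove 0) Fin.succ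
        = Matrix.diagonal (fun _ : Fin n => (X : ℂ[X])) := by
      ext i j
      simp only [Matrix.submatrix_apply, Fin.succAbove_zero, Matrix.diagonal_apply]
      rcases eq_or_ne i j with rfl | hij
      · rw [if_pos rfl, charmatrix_apply_eq, h _ _ (Fin.succ_ne_zero i), map_zero, sub_zero]
      · rw [if_neg hij, charmatrix_apply_ne _ _ _ (by simpa using hij),
          h _ _ (Fin.succ_ne_zero i), map_zero, neg_zero]
    rw [hsub, Matrix.det_diagonal, Finset.prod_const, charmatrix_apply_eq]
    simp [mul_comm, Finset.card_univ]
  · intro i _ hi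
    rw [charmatrix_apply_ne _ _ _ hi, h _ _ hi, map_zero, neg_zero, mul_zero, zero_mul]
  · simp

section AuxDet
variable (k : ℕ) (βvh βhv δh δv : ℝ) (βrv βvr δr ν : ℕ → ℝ) (γ : ℕ → ℕ → ℝ)

private lemma det_Vfull' :
    (Vfull k βhv δh δv βrv βvr δr ν γ).det
      = δh * ((Vfull k βhv δh δv βrv βvr δr ν γ).submatrix Fin.succ Fin.succ).det := by
  rw [Matrix.det_succ_row_zero, Finset.sum_eq_single 0]
  · simp [Vfull, Fin.succAbove_zero]
  · intro j _ hj
    have : (j : ℕ) ≠ 0 := by intro h; exact hj (Fin.ext h)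
    simp [Vfull, this, hj]
  · simp

private lemma adj_Vfull' :
    (Vfull k βhv δh δv βrv βvr δr ν γ).adjugate 1 0
      = βhv * ((Vfull k βhv δh δv βrv βvr δr ν γ).submatrix
          (fun p : Fin k => p.succ.succ) (fun p : Fin k => p.succ.succ)).det := by
  rw [Matrix.adjugate_fin_succ_eq_det_submatrix]
  rw [Matrix.det_succ_column_zero, Finset.sum_eq_single 0]
  · have h1 : (Fin.succAbove (0 : Fin (k+2))) (0 : Fin (k+1)) = 1 := rfl
    have h2 : (Fin.succAbove (1 : Fin (k+2))) (0 : Fin (k+1)) = 0 := rfl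
    have h3 : ∀ p : Fin k, (Fin.succAbove (0 : Fin (k+2))) p.succ = p.succ.succ := by
      intro p; simp [Fin.succAbove_zero]
    have h4 : ∀ p : Fin k, (Fin.succAbove (1 : Fin (k+2))) p.succ = p.succ.succ := by
      intro p
      have hle : (1 : Fin (k+2)) ≤ p.succ.castSucc := by
        simp only [Fin.le_def, Fin.coe_castSucc, Fin.val_succ, Fin.val_one]; omega
      rw [Fin.succAbove_of_le_castSucc _ _ hle]
    have hsub : (((Vfull k βhv δh δv βrv βvr δr ν γ).submatrix
          (Fin.succAbove 0) (Fin.succAbove 1)).submatrix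
            (Fin.succAbove (0 : Fin (k+1))) Fin.succ)
        = (Vfull k βhv δh δv βrv βvr δr ν γ).submatrix
            (fun p : Fin k => p.succ.succ) (fun p : Fin k => p.succ.succ) := by
      ext i j
      simp [Fin.succAbove_zero, h3, h4]
    have hent : (Vfull k βhv δh δv βrv βvr δr ν γ) 1 0 = -βhv := by simp [Vfull]
    simp only [Matrix.submatrix_apply, h1, h2, hsub, hent]
    norm_num
  · intro i _ hi
    have h0 : (Fin.succAbove (1 : Fin (k+2))) (0 : Fin (k+1)) = 0 := rfl
    have hi' : (i : ℕ) ≠ 0 := by intro h; exact hi (Fin.ext h)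
    have hz : (Vfull k βhv δh δv βrv βvr δr ν γ) i.succ 0 = 0 := by
      simp only [Vfull, Matrix.of_apply, Fin.val_succ, Fin.val_zero]
      rw [if_neg (by omega), if_neg (by omega)]; simp
    simp only [Matrix.submatrix_apply, h0, Fin.succAbove_zero, hz, mul_zero, zero_mul]
  · simp

end AuxDet


/-- The spectral radius of `G = F V⁻¹` equals `β_hv β_vh det K / (δ_h det V₁,₁)`, where
`K` is the lower-right `k×k` block of `V` and `V₁,₁` is `V` with its first row and column
deleted (given `δ_h > 0`, `det V ≠ 0`, and `G₁₁ ≥ 0`). -/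

theorem specRad_full_ngm (k : ℕ) (βvh βhv δh δv : ℝ) (βrv βvr δr ν : ℕ → ℝ)
    (γ : ℕ → ℕ → ℝ)
    (hδh : 0 < δh)
    (hdet : (Vfull k βhv δh δv βrv βvr δr ν γ).det ≠ 0)
    (hG : 0 ≤ (Ffull k βvh * (Vfull k βhv δh δv βrv βvr δr ν γ)⁻¹) 0 0) :
    specRad (Ffull k βvh * (Vfull k βhv δh δv βrv βvr δr ν γ)⁻¹) =
      βhv * βvh *
          ((Vfull k βhv δh δv βrv βvr δr ν γ).submatrix
            (fun p : Fin k => p.succ.succ) (fun p : Fin k => p.succ.succ)).det /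
        (δh * ((Vfull k βhv δh δv βrv βvr δr ν γ).submatrix Fin.succ Fin.succ).det) := by
  set V := Vfull k βhv δh δv βrv βvr δr ν γ with hVdef
  set G := Ffull k βvh * V⁻¹ with hGdef
  have hdet1 : V.det = δh * (V.submatrix Fin.succ Fin.succ).det :=
    det_Vfull' k βhv δh δv βrv βvr δr ν γ
  have hd2 : δh * (V.submatrix Fin.succ Fin.succ).det ≠ 0 := hdet1 ▸ hdet
  -- value of G 0 0
  have hG00 : G 0 0 = βhv * βvh *
      (V.submatrix (fun p : Fin k => p.succ.succ) (fun p : Fin k => p.succ.succ)).det /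
        (δh * (V.submatrix Fin.succ Fin.succ).det) := by
    have h1 : G 0 0 = βvh * V⁻¹ 1 0 := by
      rw [hGdef, Matrix.mul_apply, Finset.sum_eq_single (1 : Fin (k+2))]
      · simp [Ffull]
      · intro l _ hl
        have : (l : ℕ) ≠ 1 := by simpa [Fin.ext_iff] using hl
        simp [Ffull, this]
      · simp
    rw [h1, Matrix.inv_def, Matrix.smul_apply, Ring.inverse_eq_inv,
      adj_Vfull' k βhv δh δv βrv βvr δr ν γ, hdet1]
    field_simp
    rw [← hVdef]
    linear_combination (βvh * βhv * (V.submatrix (fun p : Fin k => p.succ.succ) (fun p : Fin k => p.succ.succ)).det * (V.submatrix Fin.succ Fin.succ).det⁻¹) * mul_inv_cancel₀ hδh.ne'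
  -- charpoly of the complexification
  have hrow : ∀ i j : Fin (k+2), i ≠ 0 → (G.map (algebraMap ℝ ℂ)) i j = 0 := by
    intro i j hi
    have hi' : (i : ℕ) ≠ 0 := by intro h; exact hi (Fin.ext h)
    simp [Matrix.map_apply, hGdef, Matrix.mul_apply, Ffull, hi', hi]
  have hcp := charpoly_row_zero' (n := k + 1) (G.map (algebraMap ℝ ℂ)) hrow
  have hroot : ∀ μ : ℂ, ((G.map (algebraMap ℝ ℂ)).charpoly).IsRoot μ ↔
      (μ = 0 ∨ μ = ((G 0 0 : ℝ) : ℂ)) := by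
    intro μ
    rw [hcp]
    simp [Polynomial.IsRoot, Matrix.map_apply, sub_eq_zero, pow_eq_zero_iff, or_comm]
  have hset : {r : ℝ | ∃ μ : ℂ, ((G.map (algebraMap ℝ ℂ)).charpoly).IsRoot μ ∧
      r = ‖μ‖} = {0, G 0 0} := by
    ext r
    simp only [Set.mem_setOf_eq, Set.mem_insert_iff, Set.mem_singleton_iff]
    constructor
    · rintro ⟨μ, hμ, rfl⟩
      rcases (hroot μ).1 hμ with rfl | rfl
      · left; simp
      · right; simp [Complex.norm_of_nonneg hG, abs_of_nonneg hG]
    · rintro (rfl | rfl)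
      · exact ⟨0, (hroot 0).2 (Or.inl rfl), by simp⟩
      · exact ⟨((G 0 0 : ℝ) : ℂ), (hroot _).2 (Or.inr rfl),
          by simp [Complex.norm_of_nonneg hG, abs_of_nonneg hG]⟩
  rw [show specRad G = sSup {r : ℝ | ∃ μ : ℂ, ((G.map (algebraMap ℝ ℂ)).charpoly).IsRoot μ ∧
      r = ‖μ‖} from rfl, hset, csSup_pair, sup_eq_right.mpr hG, hG00]
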